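/- For all sufficiently large real z the following holds: if N ≥ 2 is an integer such that the exponent λ(N) of the unit group (ℤ/Nℤ)^× satisfies λ(N) ≤ e^{(5/6)·z} and log N ≤ z^{4·log z}, then every finite sequence of at least e^z units of ℤ/Nℤ contains a nonempty subsequence whose product is 1; equivalently, s(N) < e^z. -/

import Mathlib

open Finset

lemma key_zero_sum {ι G : Type*} [DecidableEq ι] [CommGroup G] (f : ι → G) (m : ℕ)
    (hm : 1 ≤ m) (hpow : ∀ x : G, x ^ m = 1) :
    ∀ k : ℕ, ∀ g : G, ∀ F : Finset (Finset ι),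
      (∀ A ∈ F, A.card = k) → (∀ A ∈ F, ∏ i ∈ A, f i = g) →
      (m * k) ^ k < F.card →
      ∃ S : Finset ι, S.Nonempty ∧ ∏ i ∈ S, f i = 1 := by
  intro k
  induction k with
  | zero =>
      intro g F hcard _ hF
      exfalso
      have hsub : F ⊆ {∅} := fun A hA => by
        simp [Finset.card_eq_zero.mp (hcard A hA)]
      have := Finset.card_le_card hsub
      simp only [Finset.card_singleton] at this
      simp only [Nat.mul_zero, pow_zero] at hF
      omega
  | succ k IH =>
      intro g F hcard hprod hF
      classical
      set S : Finset (Finset (Finset ι)) :=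
        F.powerset.filter (fun D => (D : Set (Finset ι)).Pairwise Disjoint) with hSdef
      have hSne : S.Nonempty := ⟨∅, by simp [hSdef]⟩
      obtain ⟨D, hDS, hDmax⟩ := S.exists_max_image Finset.card hSne
      have hDF : D ⊆ F := Finset.mem_powerset.mp (Finset.mem_filter.mp hDS).1
      have hDdisj : (D : Set (Finset ι)).Pairwise Disjoint := (Finset.mem_filter.mp hDS).2
      by_cases hDm : m ≤ D.card
      · obtain ⟨E, hED, hE⟩ := Finset.exists_subset_card_eq hDm
        have hEF : ∀ A ∈ E, A ∈ F := fun A hA => hDF (hED hA)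
        refine ⟨E.biUnion (fun A => A), ?_, ?_⟩
        · have hEne : E.Nonempty := Finset.card_pos.mp (by omega)
          obtain ⟨A, hA⟩ := hEne
          have hAne : A.Nonempty := Finset.card_pos.mp (by rw [hcard A (hEF A hA)]; omega)
          obtain ⟨i, hi⟩ := hAne
          exact ⟨i, Finset.mem_biUnion.mpr ⟨A, hA, hi⟩⟩
        · have hpd : Set.PairwiseDisjoint ↑E (fun A : Finset ι => A) :=
            fun a ha b hb hab => hDdisj (hED ha) (hED hb) hab
          rw [Finset.prod_biUnion hpd]
          have : ∀ A ∈ E, ∏ i ∈ A, f i = g := fun A hA => hprod A (hEF A hA)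
          rw [Finset.prod_congr rfl this, Finset.prod_const, hE, hpow]
      · -- D.card ≤ m - 1
        set U : Finset ι := D.biUnion id with hUdef
        have hUcard : U.card ≤ (m - 1) * (k + 1) := by
          calc U.card ≤ ∑ A ∈ D, (id A).card := Finset.card_biUnion_le
            _ = ∑ A ∈ D, (k+1) := Finset.sum_congr rfl (fun A hA => hcard A (hDF hA))
            _ = D.card * (k+1) := by rw [Finset.sum_const, smul_eq_mul]
            _ ≤ (m - 1) * (k+1) := Nat.mul_le_mul_right _ (by omega)
        have hmeet : ∀ A ∈ F, (U.filter (· ∈ A)).Nonempty := by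
          intro A hAF
          by_contra hempty
          have hdisj : ∀ x ∈ U, x ∉ A := by
            intro x hxU hxA
            exact hempty ⟨x, Finset.mem_filter.mpr ⟨hxU, hxA⟩⟩
          by_cases hAD : A ∈ D
          · have hAU : A ⊆ U := Finset.subset_biUnion_of_mem id hAD
            have hAne : A.Nonempty := Finset.card_pos.mp (by rw [hcard A hAF]; omega)
            obtain ⟨i, hi⟩ := hAne
            exact hdisj i (hAU hi) hi
          · have hD' : insert A D ∈ S := by
              refine Finset.mem_filter.mpr ⟨Finset.mem_powerset.mpr ?_, ?_⟩
              · exact Finset.insert_subset hAF hDF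
              · rw [Finset.coe_insert]
                refine hDdisj.insert ?_
                intro B hBD _
                have hBU : B ⊆ U := Finset.subset_biUnion_of_mem id hBD
                have h1 : Disjoint A B := by
                  rw [Finset.disjoint_left]
                  intro x hxA hxB
                  exact hdisj x (hBU hxB) hxA
                exact ⟨h1, h1.symm⟩
            have := hDmax _ hD'
            rw [Finset.card_insert_of_notMem hAD] at this
            omega
        have hsum : F.card ≤ ∑ x ∈ U, (F.filter (fun A => x ∈ A)).card := by
          calc F.card = ∑ _A ∈ F, 1 := by simp
            _ ≤ ∑ A ∈ F, (U.filter (· ∈ A)).card :=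
                Finset.sum_le_sum (fun A hA => (hmeet A hA).card_pos)
            _ = ∑ A ∈ F, ∑ x ∈ U, (if x ∈ A then 1 else 0) := by
                refine Finset.sum_congr rfl (fun A _ => ?_)
                rw [Finset.card_filter]
            _ = ∑ x ∈ U, ∑ A ∈ F, (if x ∈ A then 1 else 0) := Finset.sum_comm
            _ = ∑ x ∈ U, (F.filter (fun A => x ∈ A)).card := by
                refine Finset.sum_congr rfl (fun x _ => ?_)
                rw [Finset.card_filter]
        have hex : ∃ x ∈ U, (m * k) ^ k < (F.filter (fun A => x ∈ A)).card := by
          by_contra hc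
          push_neg at hc
          have h1 : ∑ x ∈ U, (F.filter (fun A => x ∈ A)).card ≤ U.card * (m*k)^k := by
            calc ∑ x ∈ U, (F.filter (fun A => x ∈ A)).card
                ≤ ∑ _x ∈ U, (m*k)^k := Finset.sum_le_sum hc
              _ = U.card * (m*k)^k := by rw [Finset.sum_const, smul_eq_mul]
          have hp : 0 < (m*k)^k := by
            rcases Nat.eq_zero_or_pos k with hk | hk
            · simp [hk]
            · exact Nat.pow_pos (by positivity)
          have h2 : F.card ≤ (m-1) * (k+1) * (m*k)^k :=
            le_trans hsum (le_trans h1 (Nat.mul_le_mul_right _ hUcard))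
          have h3 : (m-1) * (k+1) * (m*k)^k < (m * (k+1)) ^ (k+1) := by
            have hlt : (m-1) * (k+1) < m * (k+1) :=
              Nat.mul_lt_mul_of_lt_of_le (by omega) le_rfl (by omega)
            calc (m-1) * (k+1) * (m*k)^k < m * (k+1) * (m*k)^k :=
                  Nat.mul_lt_mul_of_lt_of_le hlt le_rfl hp
              _ ≤ m * (k+1) * (m*(k+1))^k :=
                  Nat.mul_le_mul_left _ (Nat.pow_le_pow_left (Nat.mul_le_mul_left _ (by omega)) _)
              _ = (m * (k+1)) ^ (k+1) := by rw [pow_succ, mul_comm]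
          omega
        obtain ⟨x, _hxU, hdeg⟩ := hex
        set F' : Finset (Finset ι) := (F.filter (fun A => x ∈ A)).image (fun A => A.erase x)
          with hF'def
        have hinj : Set.InjOn (fun A : Finset ι => A.erase x) ↑(F.filter (fun A => x ∈ A)) := by
          intro A hA B hB hAB
          simp only [Finset.coe_filter, Set.mem_setOf_eq] at hA hB
          simp only at hAB
          rw [← Finset.insert_erase hA.2, ← Finset.insert_erase hB.2, hAB]
        have hF'card : (m*k)^k < F'.card := by
          rw [hF'def, Finset.card_image_of_injOn hinj]
          exact hdeg
        refine IH ((f x)⁻¹ * g) F' ?_ ?_ hF'card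
        · intro B hB
          obtain ⟨A, hA, rfl⟩ := Finset.mem_image.mp hB
          have hA' := Finset.mem_filter.mp hA
          rw [Finset.card_erase_of_mem hA'.2, hcard A hA'.1]
          omega
        · intro B hB
          obtain ⟨A, hA, rfl⟩ := Finset.mem_image.mp hB
          have hA' := Finset.mem_filter.mp hA
          rw [← hprod A hA'.1, ← Finset.mul_prod_erase A f hA'.2, inv_mul_cancel_left]


lemma exists_sublist_of_finset {α : Type*} [CommMonoid α] (l : List α)
    (S : Finset (Fin l.length)) (hS : S.Nonempty) :
    ∃ t : List α, t.Sublist l ∧ t ≠ [] ∧ t.prod = ∏ i ∈ S, l.get i := by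
  classical
  set il : List (Fin l.length) := S.sort (· ≤ ·) with hil
  have hsort : il.SortedLT := S.sortedLT_sort
  have hlen : (il.map l.get).length = il.length := List.length_map _
  refine ⟨il.map l.get, ?_, ?_, ?_⟩
  · rw [List.sublist_iff_exists_fin_orderEmbedding_get_eq]
    refine ⟨OrderEmbedding.ofStrictMono
      (fun i => il.get (Fin.cast hlen i)) ?_, ?_⟩
    · intro a b hab
      exact hsort.strictMono_get (show (⟨a.1, _⟩ : Fin il.length) < ⟨b.1, _⟩ from hab)
    · intro ix
      simp [List.get_eq_getElem, List.getElem_map]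
  · intro h
    have h0 := List.length_eq_zero_iff.mpr h
    rw [hlen, Finset.length_sort] at h0
    exact absurd h0 (Nat.pos_iff_ne_zero.mp hS.card_pos)
  · rw [Finset.prod_eq_multiset_prod, ← Finset.sort_eq S (· ≤ ·)]
    rw [← hil]
    rw [Multiset.map_coe, Multiset.prod_coe]

set_option maxHeartbeats 1000000 in
/-- For all sufficiently large real `z`: if `N ≥ 2` has `λ(N) ≤ e^{(5/6)z}`
and `log N ≤ z^{4 log z}`, then every sequence of at least `e^z` units of
`ℤ/Nℤ` contains a nonempty subsequence whose product is `1`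
(equivalently, `s(N) < e^z`). -/
theorem s_bound :
    ∀ᶠ z : ℝ in Filter.atTop, ∀ N : ℕ, 2 ≤ N →
      (Monoid.exponent (ZMod N)ˣ : ℝ) ≤ Real.exp ((5 / 6) * z) →
      Real.log N ≤ z ^ (4 * Real.log z) →
      ∀ l : List (ZMod N)ˣ, Real.exp z ≤ (l.length : ℝ) →
        ∃ t : List (ZMod N)ˣ, t.Sublist l ∧ t ≠ [] ∧ t.prod = 1 := by
  rw [Filter.eventually_atTop]
  refine ⟨(10:ℝ)^10, fun z hz => ?_⟩
  intro N hN2 hmexp hlogN l hlen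
  haveI : NeZero N := ⟨by omega⟩
  set m : ℕ := Monoid.exponent (ZMod N)ˣ with hmdef
  have hm1 : 1 ≤ m := Nat.one_le_iff_ne_zero.mpr Monoid.exponent_ne_zero_of_finite
  set L : ℝ := z ^ (4 * Real.log z) with hLdef
  set k : ℕ := ⌈L⌉₊ + 1 with hkdef
  set n : ℕ := l.length with hndef
  -- numeric groundwork
  have hz10 : (10000000000:ℝ) ≤ z := by norm_num at hz; linarith
  have hz0 : (0:ℝ) < z := by linarith
  have hlogz1 : (1:ℝ) ≤ Real.log z := by
    rw [Real.le_log_iff_exp_le hz0]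
    have := Real.exp_one_lt_d9
    linarith
  have hLz : z ≤ L := by
    rw [hLdef]
    calc z = z ^ (1:ℝ) := (Real.rpow_one z).symm
      _ ≤ z ^ (4 * Real.log z) :=
        Real.rpow_le_rpow_of_exponent_le (by linarith) (by linarith)
  have hL2 : (2:ℝ) ≤ L := by linarith
  have hL0 : (0:ℝ) ≤ L := by linarith
  have hkL1 : L + 1 ≤ (k:ℝ) := by
    rw [hkdef]; push_cast
    linarith [Nat.le_ceil L]
  have hkL2 : (k:ℝ) ≤ L + 2 := by
    rw [hkdef]; push_cast
    linarith [Nat.ceil_lt_add_one hL0]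
  have hk1 : (1:ℝ) ≤ (k:ℝ) := by linarith
  have hk0 : (0:ℝ) < (k:ℝ) := by linarith
  -- log bound: 8 (log z)^2 + 3 ≤ z/12
  have hlogsq : 8 * (Real.log z)^2 + 3 ≤ z / 12 := by
    set u : ℝ := z ^ ((1:ℝ)/4) with hudef
    have hu0 : 0 < u := Real.rpow_pos_of_pos hz0 _
    have hu4 : u ^ (4:ℕ) = z := by
      rw [hudef, ← Real.rpow_natCast (z ^ ((1:ℝ)/4)) 4, ← Real.rpow_mul (le_of_lt hz0)]
      norm_num
    have hlogu : Real.log z = 4 * Real.log u := by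
      rw [hudef, Real.log_rpow hz0]; ring
    have hloguu : Real.log u ≤ u := by
      have := Real.log_le_sub_one_of_pos hu0
      linarith
    have hu100 : (100:ℝ) ≤ u := by
      by_contra hcon
      push_neg at hcon
      have hlt : u ^ (4:ℕ) < 100 ^ (4:ℕ) := by
        exact pow_lt_pow_left₀ hcon (le_of_lt hu0) (by norm_num)
      rw [hu4] at hlt
      norm_num at hlt
      linarith
    have hlz : Real.log z ≤ 4 * u := by
      rw [hlogu]; linarith
    have hlz0 : (0:ℝ) ≤ Real.log z := by linarith
    have hsq : (Real.log z)^2 ≤ 16 * u^2 := by nlinarith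
    have hz4 : z = u^(4:ℕ) := hu4.symm
    nlinarith [sq_nonneg u, sq_nonneg (u^2)]
  -- 2 k^2 ≤ exp (z/12)
  have hLexp : L = Real.exp (Real.log z * (4 * Real.log z)) := by
    rw [hLdef, Real.rpow_def_of_pos hz0]
  have h8exp3 : (8:ℝ) ≤ Real.exp 3 := by
    have h2 : (2:ℝ) ≤ Real.exp 1 := by linarith [Real.exp_one_gt_d9]
    have he3 : Real.exp 3 = Real.exp 1 * Real.exp 1 * Real.exp 1 := by
      rw [← Real.exp_add, ← Real.exp_add]; norm_num
    nlinarith [Real.exp_pos 1]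
  have h2k2 : 2 * (k:ℝ)^2 ≤ Real.exp (z/12) := by
    have h1 : (k:ℝ)^2 ≤ 4 * L^2 := by nlinarith
    have h2 : 2 * (k:ℝ)^2 ≤ 8 * L^2 := by linarith
    have hL2exp : L^2 = Real.exp (8 * (Real.log z)^2) := by
      rw [hLexp, ← Real.exp_nat_mul]
      congr 1; push_cast; ring
    have h4 : Real.exp 3 * Real.exp (8 * (Real.log z)^2) ≤ Real.exp (z/12) := by
      rw [← Real.exp_add]
      apply Real.exp_le_exp.mpr
      linarith
    have h5 : (8:ℝ) * Real.exp (8 * (Real.log z)^2) ≤ Real.exp 3 * Real.exp (8 * (Real.log z)^2) := by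
      nlinarith [Real.exp_pos (8 * (Real.log z)^2)]
    rw [hL2exp] at h2
    linarith
  -- N ≤ exp L
  have hNpos : (0:ℝ) < (N:ℝ) := by exact_mod_cast (show 0 < N by omega)
  have hNle : (N:ℝ) ≤ Real.exp L := by
    rw [← Real.exp_log hNpos]
    exact Real.exp_le_exp.mpr hlogN
  have hmR1 : (1:ℝ) ≤ (m:ℝ) := by exact_mod_cast hm1
  have hm0 : (0:ℝ) < (m:ℝ) := by linarith
  have hnR : Real.exp z ≤ (n:ℝ) := hlen
  have hn0 : (0:ℝ) < (n:ℝ) := lt_of_lt_of_le (Real.exp_pos z) hnR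
  have hden0 : (0:ℝ) < 2 * (m:ℝ) * (k:ℝ)^2 := by positivity
  -- step : exp(z/12) ≤ n / (2 m k²)
  have hstep : Real.exp (z/12) ≤ (n:ℝ) / (2 * (m:ℝ) * (k:ℝ)^2) := by
    rw [le_div_iff₀ hden0]
    have hd : 2 * (m:ℝ) * (k:ℝ)^2 ≤ Real.exp (z/12) * Real.exp (5/6*z) := by
      calc 2 * (m:ℝ) * (k:ℝ)^2 = (2 * (k:ℝ)^2) * (m:ℝ) := by ring
        _ ≤ Real.exp (z/12) * Real.exp (5/6*z) := by
            exact mul_le_mul h2k2 hmexp (by positivity) (by positivity)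
    calc Real.exp (z/12) * (2 * (m:ℝ) * (k:ℝ)^2)
        ≤ Real.exp (z/12) * (Real.exp (z/12) * Real.exp (5/6*z)) :=
          mul_le_mul_of_nonneg_left hd (le_of_lt (Real.exp_pos _))
      _ = Real.exp (z/12 + (z/12 + 5/6*z)) := by rw [Real.exp_add, Real.exp_add]
      _ = Real.exp z := by congr 1; ring
      _ ≤ (n:ℝ) := hnR
  -- growth : 2 exp L ≤ exp(z/12)^k
  have hgrow : 2 * Real.exp L ≤ Real.exp (z/12) ^ k := by
    rw [← Real.exp_nat_mul]
    have hlog2 : Real.log 2 ≤ 1 := by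
      have := Real.log_le_sub_one_of_pos (show (0:ℝ) < 2 by norm_num)
      linarith
    have h2e : 2 * Real.exp L = Real.exp (Real.log 2 + L) := by
      rw [Real.exp_add, Real.exp_log (show (0:ℝ) < 2 by norm_num)]
    rw [h2e]
    apply Real.exp_le_exp.mpr
    have hz24 : (24:ℝ) ≤ z := by linarith
    have hq : (L+1) * 2 ≤ (k:ℝ) * (z/12) := by
      have h1 : (L+1) * 2 ≤ (k:ℝ) * 2 := by linarith
      have h2 : (k:ℝ) * 2 ≤ (k:ℝ) * (z/12) := by nlinarith
      linarith
    linarith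
  -- core chain
  have hcast : (((m*k)^k + 1 : ℕ):ℝ) = ((m:ℝ)*(k:ℝ))^k + 1 := by push_cast; ring
  have ha1 : (1:ℝ) ≤ ((m:ℝ)*(k:ℝ))^k := by
    calc (1:ℝ) = 1^k := (one_pow k).symm
      _ ≤ ((m:ℝ)*(k:ℝ))^k := pow_le_pow_left₀ (by norm_num) (by nlinarith) k
  have hfrac : ((n:ℝ)/(2*(m:ℝ)*(k:ℝ)^2)) * ((m:ℝ)*(k:ℝ)) = (n:ℝ)/(2*(k:ℝ)) := by
    field_simp
  have hchainR : (N:ℝ) * (((m*k)^k + 1:ℕ):ℝ) ≤ ((n:ℝ)/2)^k / (k:ℝ)^k := by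
    rw [hcast]
    calc (N:ℝ) * (((m:ℝ)*(k:ℝ))^k + 1)
        ≤ Real.exp L * (2*((m:ℝ)*(k:ℝ))^k) := by nlinarith [Real.exp_pos L]
      _ = (2*Real.exp L) * ((m:ℝ)*(k:ℝ))^k := by ring
      _ ≤ Real.exp (z/12)^k * ((m:ℝ)*(k:ℝ))^k :=
          mul_le_mul_of_nonneg_right hgrow (by positivity)
      _ ≤ ((n:ℝ)/(2*(m:ℝ)*(k:ℝ)^2))^k * ((m:ℝ)*(k:ℝ))^k := by
          apply mul_le_mul_of_nonneg_right _ (by positivity)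
          exact pow_le_pow_left₀ (le_of_lt (Real.exp_pos _)) hstep k
      _ = (((n:ℝ)/(2*(m:ℝ)*(k:ℝ)^2)) * ((m:ℝ)*(k:ℝ)))^k := (mul_pow _ _ _).symm
      _ = ((n:ℝ)/(2*(k:ℝ)))^k := by rw [hfrac]
      _ = ((n:ℝ)/2)^k / (k:ℝ)^k := by
          rw [show (n:ℝ)/(2*(k:ℝ)) = ((n:ℝ)/2)/(k:ℝ) from by rw [div_div], div_pow]
  -- 2k ≤ n
  have h2kn : 2*k ≤ n := by
    have hR : 2*(k:ℝ) ≤ (n:ℝ) := by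
      have h1 : 2*(k:ℝ) ≤ 2*(k:ℝ)^2 := by nlinarith
      have h3 : Real.exp (z/12) ≤ Real.exp z := Real.exp_le_exp.mpr (by linarith)
      linarith
    exact_mod_cast hR
  have hfacpos : (0:ℝ) < (Nat.factorial k : ℝ) := by
    exact_mod_cast Nat.factorial_pos k
  have hmid : ((n:ℝ)/2)^k / (k:ℝ)^k ≤ ((n + 1 - k:ℕ):ℝ)^k / (Nat.factorial k : ℝ) := by
    have hc : ((n + 1 - k:ℕ):ℝ) = (n:ℝ) + 1 - (k:ℝ) := by
      rw [Nat.cast_sub (by omega : k ≤ n + 1)]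
      push_cast
      ring
    apply div_le_div₀ (by positivity) ?_ hfacpos ?_
    · apply pow_le_pow_left₀ (by positivity)
      rw [hc]
      have : 2*(k:ℝ) ≤ (n:ℝ) := by exact_mod_cast h2kn
      linarith
    · exact_mod_cast Nat.factorial_le_pow k
  have hchoose_lb : ((n + 1 - k:ℕ):ℝ)^k / (Nat.factorial k : ℝ) ≤ (n.choose k : ℝ) := by
    exact Nat.pow_le_choose k n
  have hfinal : N * ((m*k)^k + 1) ≤ n.choose k := by
    have hfinalR : (N:ℝ) * (((m*k)^k + 1:ℕ):ℝ) ≤ (n.choose k : ℝ) :=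
      le_trans hchainR (le_trans hmid hchoose_lb)
    exact_mod_cast hfinalR
  -- pigeonhole
  have hcardU : (univ : Finset (ZMod N)ˣ).card * ((m*k)^k + 1)
      ≤ (Finset.powersetCard k (univ : Finset (Fin n))).card := by
    rw [Finset.card_powersetCard]
    simp only [Finset.card_univ, Fintype.card_fin]
    refine le_trans (Nat.mul_le_mul_right _ ?_) hfinal
    rw [ZMod.card_units_eq_totient]
    exact Nat.totient_le N
  haveI : Nonempty (ZMod N)ˣ := ⟨1⟩
  obtain ⟨g, -, hfib⟩ := Finset.exists_le_card_fiber_of_mul_le_card_of_maps_to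
    (s := Finset.powersetCard k (univ : Finset (Fin n)))
    (t := (univ : Finset (ZMod N)ˣ))
    (f := fun A : Finset (Fin n) => ∏ i ∈ A, l.get i)
    (fun A _ => Finset.mem_univ _) Finset.univ_nonempty hcardU
  set F : Finset (Finset (Fin n)) :=
    (Finset.powersetCard k (univ : Finset (Fin n))).filter
      (fun A => (∏ i ∈ A, l.get i) = g) with hFdef
  obtain ⟨S, hSne, hSprod⟩ := key_zero_sum l.get m hm1
    (fun x => Monoid.pow_exponent_eq_one x) k g F
    (fun A hA => by
      have := (Finset.mem_filter.mp hA).1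
      exact (Finset.mem_powersetCard_univ.mp this))
    (fun A hA => (Finset.mem_filter.mp hA).2)
    (by
      have : (m*k)^k + 1 ≤ F.card := hfib
      omega)
  obtain ⟨t, ht1, ht2, ht3⟩ := exists_sublist_of_finset l S hSne
  exact ⟨t, ht1, ht2, ht3.trans hSprod⟩
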